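/- Consider a finite-horizon sequential decision problem: let S be a countable state space, A a nonempty set of actions, T ∈ ℕ a horizon, r : ℕ → S → A → ℝ bounded reward functions, and κ : ℕ → S → A → PMF S transition probabilities. For a strategy π : ℕ → S → A define its value functions V^π by backward recursion: V^π_{T+1} = 0 and V^π_t(s) = r t s (π t s) + E_{s' ~ κ t s (π t s)}[V^π_{t+1}(s')] for t ≤ T. Suppose the strategy π admits no profitable one-shot deviation: for every t ≤ T, every s ∈ S, and every action a ∈ A, V^π_t(s) ≥ r t s a + E_{s' ~ κ t s a}[V^π_{t+1}(s')]. Then π is optimal among all strategies: for every strategy π', every t ≤ T+1 and every s ∈ S, V^π_t(s) ≥ V^{π'}_t(s). -/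
import Mathlib

set_option maxHeartbeats 1000000

lemma pmf_toReal_summable {S : Type*} (p : PMF S) : Summable (fun s => (p s).toReal) :=
  ENNReal.summable_toReal (by simp [p.tsum_coe])

lemma pmf_toReal_tsum {S : Type*} (p : PMF S) : ∑' s, (p s).toReal = 1 := by
  rw [← ENNReal.tsum_toReal_eq (fun s => p.apply_ne_top s), p.tsum_coe, ENNReal.toReal_one]

lemma pmf_mul_summable {S : Type*} (p : PMF S) (g : S → ℝ) (M : ℝ)
    (hg : ∀ s, |g s| ≤ M) : Summable (fun s => (p s).toReal * g s) := by
  refine Summable.of_abs (Summable.of_nonneg_of_le (fun s => abs_nonneg _)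
    (fun s => ?_) ((pmf_toReal_summable p).mul_right M))
  rw [abs_mul, abs_of_nonneg ENNReal.toReal_nonneg]
  exact mul_le_mul_of_nonneg_left (hg s) ENNReal.toReal_nonneg

/-- One-shot deviation principle for a finite-horizon sequential decision problem: if the
strategy `π` admits no profitable one-shot deviation, then `π` is optimal among all
strategies. -/
theorem stmt10 {S : Type*} [Countable S] {A : Type*} [Nonempty A] (T : ℕ)
    (r : ℕ → S → A → ℝ) (hr : ∃ C : ℝ, ∀ t s a, |r t s a| ≤ C)
    (κ : ℕ → S → A → PMF S)
    (V : (ℕ → S → A) → ℕ → S → ℝ)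
    (hV_end : ∀ π s, V π (T + 1) s = 0)
    (hV_rec : ∀ π t s, t ≤ T →
      V π t s = r t s (π t s) + ∑' s', ((κ t s (π t s)) s').toReal * V π (t + 1) s')
    (π : ℕ → S → A)
    (hdev : ∀ t ≤ T, ∀ s a,
      r t s a + ∑' s', ((κ t s a) s').toReal * V π (t + 1) s' ≤ V π t s) :
    ∀ π' : ℕ → S → A, ∀ t ≤ T + 1, ∀ s, V π' t s ≤ V π t s := by
  obtain ⟨C₀, hC₀⟩ := hr
  set C : ℝ := max C₀ 0 with hCdef
  have hC : ∀ t s a, |r t s a| ≤ C := fun t s a => (hC₀ t s a).trans (le_max_left _ _)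
  have hCnn : (0:ℝ) ≤ C := le_max_right _ _
  have key : ∀ d : ℕ, d ≤ T + 1 →
      (∀ πa s, |V πa (T + 1 - d) s| ≤ C * (d + 1)) ∧
      (∀ π' s, V π' (T + 1 - d) s ≤ V π (T + 1 - d) s) := by
    intro d
    induction d with
    | zero =>
      intro _
      simp only [Nat.sub_zero]
      refine ⟨fun πa s => ?_, fun π' s => ?_⟩
      · rw [hV_end]; simpa using hCnn
      · rw [hV_end, hV_end]
    | succ d ih =>
      intro hd
      have hd' : d ≤ T + 1 := le_of_lt hd
      obtain ⟨ihb, ihm⟩ := ih hd'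
      set t := T + 1 - (d + 1) with ht
      clear_value t
      have htT : t ≤ T := by omega
      have ht1 : t + 1 = T + 1 - d := by omega
      rw [← ht1] at ihb ihm
      have bound : ∀ πa s, |V πa t s| ≤ C * (d + 1 + 1) := by
        intro πa s
        rw [hV_rec πa t s htT]
        have hsum := pmf_mul_summable (κ t s (πa t s)) (V πa (t+1)) (C*(d+1)) (ihb πa)
        calc |r t s (πa t s) + ∑' s', ((κ t s (πa t s)) s').toReal * V πa (t + 1) s'|
            ≤ |r t s (πa t s)| + |∑' s', ((κ t s (πa t s)) s').toReal * V πa (t + 1) s'| :=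
              abs_add_le _ _
          _ ≤ C + C * (d + 1) := by
              refine add_le_add (hC _ _ _) ?_
              calc |∑' s', ((κ t s (πa t s)) s').toReal * V πa (t + 1) s'|
                  ≤ ∑' s', |((κ t s (πa t s)) s').toReal * V πa (t + 1) s'| := by
                    simpa only [Real.norm_eq_abs] using
                      norm_tsum_le_tsum_norm (f := fun s' => ((κ t s (πa t s)) s').toReal * V πa (t + 1) s')
                        (by simpa only [Real.norm_eq_abs] using hsum.abs)
                _ ≤ ∑' s', ((κ t s (πa t s)) s').toReal * (C * (d + 1)) := by
                    apply Summable.tsum_le_tsum _ hsum.abs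
                      (((pmf_toReal_summable _).mul_right _))
                    intro s'
                    rw [abs_mul, abs_of_nonneg ENNReal.toReal_nonneg]
                    exact mul_le_mul_of_nonneg_left (ihb πa s') ENNReal.toReal_nonneg
                _ = C * (d + 1) := by
                    rw [tsum_mul_right, pmf_toReal_tsum, one_mul]
          _ = C * (d + 1 + 1) := by ring
      refine ⟨fun πa s => by push_cast; exact bound πa s, fun π' s => ?_⟩
      rw [hV_rec π' t s htT]
      calc r t s (π' t s) + ∑' s', ((κ t s (π' t s)) s').toReal * V π' (t + 1) s'
          ≤ r t s (π' t s) + ∑' s', ((κ t s (π' t s)) s').toReal * V π (t + 1) s' := by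
            refine add_le_add le_rfl ?_
            apply Summable.tsum_le_tsum _
              (pmf_mul_summable _ _ _ (ihb π'))
              (pmf_mul_summable _ _ _ (ihb π))
            intro s'
            exact mul_le_mul_of_nonneg_left (ihm π' s') ENNReal.toReal_nonneg
        _ ≤ V π t s := hdev t htT s (π' t s)
  intro π' t ht s
  have h := (key (T + 1 - t) (by omega)).2 π' s
  have : T + 1 - (T + 1 - t) = t := by omega
  rwa [this] at h
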